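/- arXiv:2012.10933 — 2 statements merged into one kernel-verified Lean document; each statement's English description precedes it below -/
import Mathlib

section
/- Let k ≥ 4 and r₂, r₃, …, r_k ≥ 1, and let H be the join of a single vertex with the disjoint union of the complete graphs K_{r₂}, K_{r₃}, …, K_{r_k}. Then the eccentricity matrix ε(H) has exactly one positive eigenvalue. -/
open Finset Polynomial

noncomputable def ecc {V : Type*} [Fintype V] (G : SimpleGraph V) (u : V) : ℕ :=
  Finset.univ.sup (G.dist u)

noncomputable def eccMatrix {V : Type*} [Fintype V] (G : SimpleGraph V) :
    Matrix V V ℝ := fun u v =>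
  if G.dist u v = min (ecc G u) (ecc G v) then (G.dist u v : ℝ) else 0

theorem eccMatrix_isHermitian {V : Type*} [Fintype V] (G : SimpleGraph V) :
    (eccMatrix G).IsHermitian := by
  unfold Matrix.IsHermitian
  ext u v
  simp only [Matrix.conjTranspose_apply, eccMatrix, star_trivial]
  rw [SimpleGraph.dist_comm, min_comm]

/-- Number of positive eigenvalues (with multiplicity) of a real symmetric matrix. -/
noncomputable def posEigCount {V : Type*} [Fintype V] [DecidableEq V]
    {A : Matrix V V ℝ} (hA : A.IsHermitian) : ℕ :=
  (Finset.univ.filter fun i => 0 < hA.eigenvalues i).card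

/-- The join of two simple graphs: disjoint union plus all edges in between. -/
def graphJoin {α β : Type*} (G : SimpleGraph α) (H : SimpleGraph β) :
    SimpleGraph (α ⊕ β) where
  Adj x y := match x, y with
    | Sum.inl a, Sum.inl b => G.Adj a b
    | Sum.inr a, Sum.inr b => H.Adj a b
    | _, _ => True
  symm := ⟨by rintro (a|a) (b|b) h <;> first | exact G.adj_symm h | exact H.adj_symm h | trivial⟩
  loopless := ⟨by rintro (a|a) h <;> first | exact G.irrefl h | exact H.irrefl h⟩

/-- The disjoint union of two simple graphs. -/
def graphSum {α β : Type*} (G : SimpleGraph α) (H : SimpleGraph β) :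
    SimpleGraph (α ⊕ β) where
  Adj x y := match x, y with
    | Sum.inl a, Sum.inl b => G.Adj a b
    | Sum.inr a, Sum.inr b => H.Adj a b
    | _, _ => False
  symm := ⟨by rintro (a|a) (b|b) h <;> first | exact G.adj_symm h | exact H.adj_symm h | trivial⟩
  loopless := ⟨by rintro (a|a) h <;> first | exact G.irrefl h | exact H.irrefl h⟩

/-- Disjoint union of blocks indexed by `ι`; block `i` has `r i` vertices and is a
clique when `P i` holds and a coclique (independent set) otherwise. -/
def blocksGraph {ι : Type*} (r : ι → ℕ) (P : ι → Prop) :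
    SimpleGraph (Σ i, Fin (r i)) where
  Adj x y := x ≠ y ∧ x.1 = y.1 ∧ P x.1
  symm := ⟨by rintro x y ⟨h1, h2, h3⟩; exact ⟨h1.symm, h2.symm, h2 ▸ h3⟩⟩
  loopless := ⟨fun x h => h.1 rfl⟩

section LinAlg
open Matrix
variable {n : Type*} [Fintype n] [DecidableEq n] {A : Matrix n n ℝ} (hA : A.IsHermitian)

lemma quad_expand (x : n → ℝ) :
    x ⬝ᵥ A *ᵥ x = ∑ l, hA.eigenvalues l *
      ((star (hA.eigenvectorUnitary : Matrix n n ℝ)) *ᵥ x) l ^ 2 := by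
  conv_lhs => rw [hA.spectral_theorem, Unitary.conjStarAlgAut_apply]
  set U : Matrix n n ℝ := (hA.eigenvectorUnitary : Matrix n n ℝ) with hU
  set y : n → ℝ := (star U) *ᵥ x with hy
  have h1 : (U * diagonal (RCLike.ofReal ∘ hA.eigenvalues) * star U) *ᵥ x
      = U *ᵥ (diagonal (RCLike.ofReal ∘ hA.eigenvalues) *ᵥ y) := by
    rw [hy, mulVec_mulVec, mulVec_mulVec]
  rw [h1, dotProduct_mulVec]
  have h2 : x ᵥ* U = y := by
    ext l
    simp [vecMul, hy, mulVec, dotProduct, star_apply, mul_comm]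
  rw [h2]
  simp [dotProduct, mulVec_diagonal, Function.comp]
  ring_nf
  exact Finset.sum_congr rfl fun l _ => by ring



lemma one_le_posEig (x : n → ℝ) (hx : 0 < x ⬝ᵥ A *ᵥ x) : 1 ≤ posEigCount hA := by
  by_contra h
  push_neg at h
  interval_cases hc : posEigCount hA
  rw [posEigCount, Finset.card_eq_zero, Finset.filter_eq_empty_iff] at hc
  have : x ⬝ᵥ A *ᵥ x ≤ 0 := by
    rw [quad_expand hA x]
    apply Finset.sum_nonpos
    intro l _
    exact mul_nonpos_of_nonpos_of_nonneg (le_of_not_gt (hc (Finset.mem_univ l))) (sq_nonneg _)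
  linarith

lemma posEig_le_one (w : n → ℝ)
    (hw : ∀ x : n → ℝ, w ⬝ᵥ x = 0 → x ⬝ᵥ A *ᵥ x ≤ 0) : posEigCount hA ≤ 1 := by
  rw [posEigCount, Finset.card_le_one]
  intro i hi j hj
  by_contra hij
  rw [Finset.mem_filter] at hi hj
  set U : Matrix n n ℝ := (hA.eigenvectorUnitary : Matrix n n ℝ) with hU
  have hUU : star U * U = 1 := hA.eigenvectorUnitary.prop.1
  set ci : n → ℝ := fun t => U t i with hci
  set cj : n → ℝ := fun t => U t j with hcj
  set a : ℝ := w ⬝ᵥ ci with ha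
  set b : ℝ := w ⬝ᵥ cj with hb
  obtain ⟨c, d, hcd, hne⟩ : ∃ c d : ℝ, c * a + d * b = 0 ∧ (c ≠ 0 ∨ d ≠ 0) := by
    by_cases h0 : a = 0
    · exact ⟨1, 0, by simp [h0], Or.inl one_ne_zero⟩
    · exact ⟨b, -a, by ring, Or.inr (neg_ne_zero.mpr h0)⟩
  set x : n → ℝ := c • ci + d • cj with hx
  have hwx : w ⬝ᵥ x = 0 := by
    rw [hx, dotProduct_add, dotProduct_smul, dotProduct_smul, ← ha, ← hb]
    simpa [smul_eq_mul] using hcd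
  have hy : ∀ l, ((star U) *ᵥ x) l
      = c * (1 : Matrix n n ℝ) l i + d * (1 : Matrix n n ℝ) l j := by
    intro l
    have e1 : ((star U) *ᵥ ci) l = (star U * U) l i := by
      simp [mulVec, dotProduct, Matrix.mul_apply, hci]
    have e2 : ((star U) *ᵥ cj) l = (star U * U) l j := by
      simp [mulVec, dotProduct, Matrix.mul_apply, hcj]
    have : ((star U) *ᵥ x) l = c * ((star U) *ᵥ ci) l + d * ((star U) *ᵥ cj) l := by
      simp [hx, mulVec_add, mulVec_smul]
    rw [this, e1, e2, hUU]
  have hq : x ⬝ᵥ A *ᵥ x = hA.eigenvalues i * c ^ 2 + hA.eigenvalues j * d ^ 2 := by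
    rw [quad_expand hA x]
    have hvanish : ∀ l ∈ Finset.univ, l ∉ ({i, j} : Finset n) →
        hA.eigenvalues l * ((star U) *ᵥ x) l ^ 2 = 0 := by
      intro l _ hl
      simp only [Finset.mem_insert, Finset.mem_singleton, not_or] at hl
      rw [hy l, Matrix.one_apply_ne hl.1, Matrix.one_apply_ne hl.2]
      ring
    rw [← Finset.sum_subset (Finset.subset_univ ({i, j} : Finset n)) hvanish,
      Finset.sum_pair hij, hy i, hy j, Matrix.one_apply_eq, Matrix.one_apply_eq,
      Matrix.one_apply_ne hij, Matrix.one_apply_ne (Ne.symm hij)]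
    ring
  have hqpos : 0 < x ⬝ᵥ A *ᵥ x := by
    rw [hq]
    rcases hne with hc | hd
    · have : 0 < hA.eigenvalues i * c ^ 2 := mul_pos hi.2 (by positivity)
      nlinarith [mul_nonneg hj.2.le (sq_nonneg d)]
    · have : 0 < hA.eigenvalues j * d ^ 2 := mul_pos hj.2 (by positivity)
      nlinarith [mul_nonneg hi.2.le (sq_nonneg c)]
  exact absurd (hw x hwx) (not_le.mpr hqpos)

end LinAlg

set_option linter.unusedSectionVars false
section
variable {ι : Type*} [Fintype ι] (r : ι → ℕ)

abbrev HG (r : ι → ℕ) : SimpleGraph (Unit ⊕ Σ i, Fin (r i)) :=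
  graphJoin (⊤ : SimpleGraph Unit) (blocksGraph r (fun _ => True))

lemma adj_lr (u : Unit) (b : Σ i, Fin (r i)) : (HG r).Adj (Sum.inl u) (Sum.inr b) := trivial

lemma adj_rl (u : Unit) (b : Σ i, Fin (r i)) : (HG r).Adj (Sum.inr b) (Sum.inl u) := trivial

lemma adj_rr (a b : Σ i, Fin (r i)) :
    (HG r).Adj (Sum.inr a) (Sum.inr b) ↔ a ≠ b ∧ a.1 = b.1 := by
  show (a ≠ b ∧ a.1 = b.1 ∧ True) ↔ _
  tauto

lemma not_adj_ll (u v : Unit) : ¬ (HG r).Adj (Sum.inl u) (Sum.inl v) := by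
  show ¬ (⊤ : SimpleGraph Unit).Adj u v
  simp

lemma dist_lr (u : Unit) (b : Σ i, Fin (r i)) :
    (HG r).dist (Sum.inl u) (Sum.inr b) = 1 :=
  SimpleGraph.dist_eq_one_iff_adj.mpr (adj_lr r u b)

lemma dist_rr_same (a b : Σ i, Fin (r i)) (hne : a ≠ b) (h1 : a.1 = b.1) :
    (HG r).dist (Sum.inr a) (Sum.inr b) = 1 :=
  SimpleGraph.dist_eq_one_iff_adj.mpr ((adj_rr r a b).mpr ⟨hne, h1⟩)

lemma dist_rr_diff (a b : Σ i, Fin (r i)) (h1 : a.1 ≠ b.1) :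
    (HG r).dist (Sum.inr a) (Sum.inr b) = 2 := by
  have hne : a ≠ b := fun h => h1 (by rw [h])
  have hle : (HG r).dist (Sum.inr a) (Sum.inr b) ≤ 2 := by
    have := SimpleGraph.dist_le (SimpleGraph.Walk.cons (adj_rl r () a)
      (SimpleGraph.Walk.cons (adj_lr r () b) SimpleGraph.Walk.nil))
    simpa using this
  have h0 : (HG r).dist (Sum.inr a) (Sum.inr b) ≠ 0 := by
    have := SimpleGraph.Reachable.pos_dist_of_ne
      ⟨SimpleGraph.Walk.cons (adj_rl r () a)
        (SimpleGraph.Walk.cons (adj_lr r () b) SimpleGraph.Walk.nil)⟩ (by simpa using hne)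
    omega
  have hne1 : (HG r).dist (Sum.inr a) (Sum.inr b) ≠ 1 := by
    rw [Ne, SimpleGraph.dist_eq_one_iff_adj, adj_rr]
    tauto
  omega

end

section
set_option linter.unusedSectionVars false
variable {ι : Type*} [Fintype ι] (r : ι → ℕ)

lemma dist_rl (u : Unit) (b : Σ i, Fin (r i)) :
    (HG r).dist (Sum.inr b) (Sum.inl u) = 1 :=
  SimpleGraph.dist_eq_one_iff_adj.mpr (adj_rl r u b)

lemma ecc_l (u : Unit) (b0 : Σ i, Fin (r i)) : ecc (HG r) (Sum.inl u) = 1 := by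
  apply le_antisymm
  · apply Finset.sup_le
    rintro (v | b) _
    · cases u; cases v
      simp [SimpleGraph.dist_self]
    · exact le_of_eq (dist_lr r u b)
  · have := Finset.le_sup (f := (HG r).dist (Sum.inl u)) (Finset.mem_univ (Sum.inr b0))
    rwa [dist_lr] at this

lemma ecc_r (a : Σ i, Fin (r i)) (j : ι) (hj : j ≠ a.1) (hrj : 1 ≤ r j) :
    ecc (HG r) (Sum.inr a) = 2 := by
  apply le_antisymm
  · apply Finset.sup_le
    rintro (v | b) _
    · rw [dist_rl]; omega
    · by_cases h1 : a.1 = b.1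
      · by_cases he : a = b
        · subst he; simp [SimpleGraph.dist_self]
        · rw [dist_rr_same r a b he h1]; omega
      · exact le_of_eq (dist_rr_diff r a b h1)
  · have := Finset.le_sup (f := (HG r).dist (Sum.inr a))
      (Finset.mem_univ (Sum.inr ⟨j, ⟨0, hrj⟩⟩))
    rwa [dist_rr_diff r a _ (by simpa using (Ne.symm hj))] at this

end

section
set_option linter.unusedSectionVars false
variable {ι : Type*} [Fintype ι] [Nonempty ι] [DecidableEq ι] (r : ι → ℕ)

def MM [DecidableEq ι] (r : ι → ℕ) : Matrix (Unit ⊕ Σ i, Fin (r i)) (Unit ⊕ Σ i, Fin (r i)) ℝ :=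
  fun u v => match u, v with
  | Sum.inl _, Sum.inl _ => 0
  | Sum.inl _, Sum.inr _ => 1
  | Sum.inr _, Sum.inl _ => 1
  | Sum.inr a, Sum.inr b => if a.1 = b.1 then 0 else 2

lemma eccMatrix_eq (hr : ∀ i, 1 ≤ r i) (hnt : ∀ i : ι, ∃ j, j ≠ i) :
    eccMatrix (HG r) = MM r := by
  have b0 : Σ i, Fin (r i) := ⟨Classical.arbitrary ι, ⟨0, hr _⟩⟩
  have eccl : ∀ u, ecc (HG r) (Sum.inl u) = 1 := fun u => ecc_l r u b0
  have eccr : ∀ a, ecc (HG r) (Sum.inr a) = 2 := by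
    intro a
    obtain ⟨j, hj⟩ := hnt a.1
    exact ecc_r r a j hj (hr j)
  ext u v
  rcases u with u | a <;> rcases v with v | b
  · cases u; cases v
    simp [eccMatrix, MM, SimpleGraph.dist_self, eccl]
  · simp [eccMatrix, MM, dist_lr, eccl, eccr]
  · simp [eccMatrix, MM, dist_rl, eccl, eccr]
  · simp only [eccMatrix, MM, eccr, min_self]
    by_cases h1 : a.1 = b.1
    · by_cases he : a = b
      · subst he; simp [SimpleGraph.dist_self]
      · rw [dist_rr_same r a b he h1]; simp [h1]
    · rw [dist_rr_diff r a b h1]; simp [h1]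

end

section
set_option linter.unusedSectionVars false
variable {ι : Type*} [Fintype ι] [Nonempty ι] [DecidableEq ι] (r : ι → ℕ)
open Matrix

lemma MM_nonneg (u v : Unit ⊕ Σ i, Fin (r i)) : 0 ≤ MM r u v := by
  rcases u with u | a <;> rcases v with v | b <;> simp [MM]
  split <;> norm_num

lemma MM_quad_pos (b0 : Σ i, Fin (r i)) :
    0 < (fun _ => (1:ℝ)) ⬝ᵥ MM r *ᵥ (fun _ => (1:ℝ)) := by
  have h : (fun _ => (1:ℝ)) ⬝ᵥ MM r *ᵥ (fun _ => (1:ℝ)) = ∑ u, ∑ v, MM r u v := by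
    simp [dotProduct, mulVec]
  rw [h]
  apply Finset.sum_pos'
  · intro u _
    exact Finset.sum_nonneg fun v _ => MM_nonneg r u v
  · refine ⟨Sum.inl (), Finset.mem_univ _, Finset.sum_pos' (fun v _ => MM_nonneg r _ v) ?_⟩
    exact ⟨Sum.inr b0, Finset.mem_univ _, by norm_num [MM]⟩

lemma MM_quad_nonpos (x : (Unit ⊕ Σ i, Fin (r i)) → ℝ)
    (hx : (Sum.elim 0 1 : (Unit ⊕ Σ i, Fin (r i)) → ℝ) ⬝ᵥ x = 0) :
    x ⬝ᵥ MM r *ᵥ x ≤ 0 := by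
  set s : ι → ℝ := fun i => ∑ j : Fin (r i), x (Sum.inr ⟨i, j⟩) with hs
  set S : ℝ := ∑ b : Σ i, Fin (r i), x (Sum.inr b) with hS
  have hsdef : ∀ i, s i = ∑ j : Fin (r i), x (Sum.inr ⟨i, j⟩) := fun i => by
    simp only [hs]
  have hS0 : S = 0 := by
    rw [hS, ← hx, dotProduct, Fintype.sum_sum_type]
    simp
  have key : x ⬝ᵥ MM r *ᵥ x = ∑ u, ∑ v, x u * MM r u v * x v := by
    simp only [dotProduct, mulVec]
    exact Finset.sum_congr rfl fun u _ => by
      rw [Finset.mul_sum]; exact Finset.sum_congr rfl fun v _ => by ring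
  have A1 : ∑ v, x (Sum.inl ()) * MM r (Sum.inl ()) v * x v = x (Sum.inl ()) * S := by
    rw [Fintype.sum_sum_type, hS, Finset.mul_sum]
    simp [MM]
  have inner2 : ∀ a : Σ i, Fin (r i), (∑ b : Σ i, Fin (r i),
      x (Sum.inr a) * MM r (Sum.inr a) (Sum.inr b) * x (Sum.inr b))
      = 2 * x (Sum.inr a) * S - 2 * x (Sum.inr a) * s a.1 := by
    intro a
    have hsplit : ∀ b : Σ i, Fin (r i),
        x (Sum.inr a) * MM r (Sum.inr a) (Sum.inr b) * x (Sum.inr b)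
        = 2 * x (Sum.inr a) * x (Sum.inr b)
          - (if a.1 = b.1 then (2:ℝ) else 0) * (x (Sum.inr a) * x (Sum.inr b)) := by
      intro b
      show x (Sum.inr a) * (if a.1 = b.1 then (0:ℝ) else 2) * x (Sum.inr b) = _
      split <;> ring
    rw [Finset.sum_congr rfl fun b _ => hsplit b, Finset.sum_sub_distrib]
    have B1 : ∑ b : Σ i, Fin (r i), 2 * x (Sum.inr a) * x (Sum.inr b)
        = 2 * x (Sum.inr a) * S := by
      rw [hS, Finset.mul_sum]
    have B2 : ∑ b : Σ i, Fin (r i),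
        (if a.1 = b.1 then (2:ℝ) else 0) * (x (Sum.inr a) * x (Sum.inr b))
        = 2 * x (Sum.inr a) * s a.1 := by
      rw [← Finset.univ_sigma_univ, Finset.sum_sigma]
      have hin : ∀ i' : ι, (∑ j' : Fin (r i'),
          (if a.1 = i' then (2:ℝ) else 0) * (x (Sum.inr a) * x (Sum.inr ⟨i', j'⟩)))
          = if a.1 = i' then 2 * x (Sum.inr a) * s i' else 0 := by
        intro i'
        by_cases h : a.1 = i'
        · simp only [h, if_true, hsdef i', Finset.mul_sum]
          exact Finset.sum_congr rfl fun j' _ => by ring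
        · simp [h]
      rw [Finset.sum_congr rfl fun i' _ => hin i', Finset.sum_ite_eq]
      simp
    rw [B1, B2]
  have A2 : ∀ a : Σ i, Fin (r i), (∑ v, x (Sum.inr a) * MM r (Sum.inr a) v * x v)
      = x (Sum.inr a) * x (Sum.inl ())
        + (2 * x (Sum.inr a) * S - 2 * x (Sum.inr a) * s a.1) := by
    intro a
    rw [Fintype.sum_sum_type, inner2 a]
    congr 1
    simp [MM]
  have A3 : ∑ a : Σ i, Fin (r i), (x (Sum.inr a) * x (Sum.inl ())
        + (2 * x (Sum.inr a) * S - 2 * x (Sum.inr a) * s a.1))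
      = S * x (Sum.inl ()) + (2 * S * S - 2 * ∑ i, s i * s i) := by
    rw [Finset.sum_add_distrib, Finset.sum_sub_distrib]
    have B1 : ∑ a : Σ i, Fin (r i), x (Sum.inr a) * x (Sum.inl ())
        = S * x (Sum.inl ()) := by
      rw [hS, Finset.sum_mul]
    have B2 : ∑ a : Σ i, Fin (r i), 2 * x (Sum.inr a) * S = 2 * S * S := by
      rw [show (2 * S * S : ℝ)
          = (∑ a : Σ i, Fin (r i), x (Sum.inr a)) * (2 * S) from by rw [← hS]; ring,
        Finset.sum_mul]
      exact Finset.sum_congr rfl fun a _ => by ring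
    have B3 : ∑ a : Σ i, Fin (r i), 2 * x (Sum.inr a) * s a.1
        = 2 * ∑ i, s i * s i := by
      rw [← Finset.univ_sigma_univ, Finset.sum_sigma, Finset.mul_sum]
      refine Finset.sum_congr rfl fun i _ => ?_
      calc ∑ j : Fin (r i), 2 * x (Sum.inr ⟨i, j⟩) * s i
          = (∑ j : Fin (r i), x (Sum.inr ⟨i, j⟩)) * (2 * s i) := by
            rw [Finset.sum_mul]
            exact Finset.sum_congr rfl fun j _ => by ring
        _ = 2 * (s i * s i) := by rw [← hsdef i]; ring
    rw [B1, B2, B3]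
  have total : x ⬝ᵥ MM r *ᵥ x
      = x (Sum.inl ()) * S + (S * x (Sum.inl ()) + (2 * S * S - 2 * ∑ i, s i * s i)) := by
    rw [key, Fintype.sum_sum_type]
    simp only [Finset.univ_unique, Finset.sum_singleton]
    rw [show (default : Unit) = () from rfl, A1, Finset.sum_congr rfl fun a _ => A2 a, A3]
  rw [total, hS0]
  have hnn : (0:ℝ) ≤ ∑ i, s i * s i :=
    Finset.sum_nonneg fun i _ => mul_self_nonneg (s i)
  linarith
end

/-- for `k ≥ 4`, the join of a single vertex with the disjoint union of
cliques of sizes `r 0, …, r (k-2)` (a mixed extension of `S_k` of type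
`(1, r₂, …, r_k)`) has exactly one positive eccentricity eigenvalue. -/
theorem stmt14 (k : ℕ) (hk : 4 ≤ k) (r : Fin (k - 1) → ℕ) (hr : ∀ i, 1 ≤ r i) :
    posEigCount (eccMatrix_isHermitian (graphJoin (⊤ : SimpleGraph Unit)
      (blocksGraph r (fun _ => True)))) = 1 := by
  have hpos : 0 < k - 1 := by omega
  haveI : Nonempty (Fin (k - 1)) := ⟨⟨0, hpos⟩⟩
  have hnt : ∀ i : Fin (k - 1), ∃ j, j ≠ i := by
    intro i
    rcases eq_or_ne i.val 0 with h | h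
    · refine ⟨⟨1, by omega⟩, ?_⟩
      intro he
      rw [Fin.ext_iff] at he
      simp at he
      omega
    · refine ⟨⟨0, by omega⟩, ?_⟩
      intro he
      rw [Fin.ext_iff] at he
      simp at he
      omega
  have heq : eccMatrix (HG r) = MM r := eccMatrix_eq r hr hnt
  have hA := eccMatrix_isHermitian (HG r)
  apply le_antisymm
  · apply posEig_le_one _ (Sum.elim 0 1)
    intro x hx
    rw [heq]
    exact MM_quad_nonpos r x hx
  · apply one_le_posEig _ (fun _ => (1:ℝ))
    rw [heq]
    exact MM_quad_pos r ⟨⟨0, hpos⟩, ⟨0, hr _⟩⟩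
end

section
/- Let k ≥ 4 and r₂, r₃, …, r_k ≥ 1, and let H be the join of the complete graph K₂ with the disjoint union of the complete graphs K_{r₂}, …, K_{r_k}. Then the eccentricity matrix ε(H) has exactly one positive eigenvalue. -/
open Finset Polynomial

open Matrix Sum

section spectral
variable {n : Type*} [Fintype n] [DecidableEq n] {A : Matrix n n ℝ}


section spectral
variable {n : Type*} [Fintype n] [DecidableEq n] {A : Matrix n n ℝ}

lemma dot_eigenbasis (hA : A.IsHermitian) (i j : n) :
    (⇑(hA.eigenvectorBasis i) : n → ℝ) ⬝ᵥ ⇑(hA.eigenvectorBasis j) = if i = j then 1 else 0 := by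
  have h := orthonormal_iff_ite.mp hA.eigenvectorBasis.orthonormal i j
  simpa [PiLp.inner_apply, RCLike.inner_apply, starRingEnd_apply, dotProduct, mul_comm] using h

lemma quad_expansion (hA : A.IsHermitian) (x : n → ℝ) :
    x ⬝ᵥ (A *ᵥ x) = ∑ i, hA.eigenvalues i * ((⇑(hA.eigenvectorBasis i) : n → ℝ) ⬝ᵥ x)^2 := by
  conv_lhs => rw [hA.spectral_theorem, Unitary.conjStarAlgAut_apply]
  rw [← Matrix.mulVec_mulVec, ← Matrix.mulVec_mulVec, Matrix.dotProduct_mulVec]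
  have h1 : x ᵥ* (hA.eigenvectorUnitary : Matrix n n ℝ)
      = fun i => (⇑(hA.eigenvectorBasis i) : n → ℝ) ⬝ᵥ x := by
    funext i
    simp [Matrix.vecMul, dotProduct, mul_comm]
  have h2 : (star (hA.eigenvectorUnitary : Matrix n n ℝ)) *ᵥ x
      = fun i => (⇑(hA.eigenvectorBasis i) : n → ℝ) ⬝ᵥ x := by
    funext i
    simp [Matrix.mulVec, dotProduct, Matrix.star_eq_conjTranspose,
      Matrix.conjTranspose_apply]
  rw [h1, h2]
  simp only [dotProduct, Matrix.mulVec_diagonal, Function.comp,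
    RCLike.ofReal_real_eq_id, id]
  exact Finset.sum_congr rfl fun i _ => by ring

lemma eigenvalue_eq_quad (hA : A.IsHermitian) (i : n) :
    hA.eigenvalues i = (⇑(hA.eigenvectorBasis i) : n → ℝ) ⬝ᵥ (A *ᵥ ⇑(hA.eigenvectorBasis i)) := by
  rw [quad_expansion hA]
  rw [Finset.sum_eq_single i]
  · rw [dot_eigenbasis hA i i]; simp
  · intro j _ hj
    rw [dot_eigenbasis hA j i, if_neg hj]
    simp
  · simp

lemma posEigCount_eq_one_of (hA : A.IsHermitian) (w : n → ℝ)
    (hq : ∀ z : n → ℝ, z ⬝ᵥ (A *ᵥ z) ≤ (w ⬝ᵥ z) ^ 2)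
    (x : n → ℝ) (hx : 0 < x ⬝ᵥ (A *ᵥ x)) :
    (Finset.univ.filter fun i => 0 < hA.eigenvalues i).card = 1 := by
  obtain ⟨i, hi⟩ : ∃ i, 0 < hA.eigenvalues i := by
    by_contra h
    push_neg at h
    have hle : x ⬝ᵥ (A *ᵥ x) ≤ 0 := by
      rw [quad_expansion hA x]
      exact Finset.sum_nonpos fun j _ => mul_nonpos_of_nonpos_of_nonneg (h j) (sq_nonneg _)
    linarith
  rw [Finset.card_eq_one]
  refine ⟨i, ?_⟩
  ext j
  simp only [Finset.mem_filter, Finset.mem_univ, true_and, Finset.mem_singleton]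
  constructor
  · intro hj
    by_contra hne
    have hne' : i ≠ j := fun h => hne h.symm
    set u : n → ℝ := ⇑(hA.eigenvectorBasis i) with hu_def
    set v : n → ℝ := ⇑(hA.eigenvectorBasis j) with hv_def
    have hu : A *ᵥ u = hA.eigenvalues i • u := hA.mulVec_eigenvectorBasis i
    have hv : A *ᵥ v = hA.eigenvalues j • v := hA.mulVec_eigenvectorBasis j
    have huu : u ⬝ᵥ u = 1 := by simpa using dot_eigenbasis hA i i
    have hvv : v ⬝ᵥ v = 1 := by simpa using dot_eigenbasis hA j j
    have huv : u ⬝ᵥ v = 0 := by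
      rw [hu_def, hv_def, dot_eigenbasis hA i j, if_neg hne']
    have hvu : v ⬝ᵥ u = 0 := by
      rw [hv_def, hu_def, dot_eigenbasis hA j i, if_neg (fun h => hne' h.symm)]
    set α := w ⬝ᵥ v with hα
    set β := w ⬝ᵥ u with hβ
    set z : n → ℝ := α • u - β • v with hz_def
    have hwz : w ⬝ᵥ z = 0 := by
      rw [hz_def, dotProduct_sub, dotProduct_smul, dotProduct_smul,
        ← hα, ← hβ]
      ring_nf
    have hz : z ⬝ᵥ (A *ᵥ z) = α ^ 2 * hA.eigenvalues i + β ^ 2 * hA.eigenvalues j := by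
      rw [hz_def, Matrix.mulVec_sub, Matrix.mulVec_smul, Matrix.mulVec_smul, hu, hv]
      simp only [sub_dotProduct, dotProduct_sub, smul_dotProduct,
        dotProduct_smul, huu, hvv, huv, hvu, smul_eq_mul]
      ring
    have hle := hq z
    rw [hz, hwz] at hle
    have hb1 : β ^ 2 ≤ 0 := by nlinarith [sq_nonneg α, sq_nonneg β]
    have hβ0 : β = 0 :=
      (pow_eq_zero_iff two_ne_zero).mp (le_antisymm hb1 (sq_nonneg β))
    have h2 := hq u
    have h3 : u ⬝ᵥ (A *ᵥ u) = hA.eigenvalues i := by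
      rw [hu]
      simp [dotProduct_smul, huu, smul_eq_mul]
    rw [h3, ← hβ, hβ0] at h2
    simpa using absurd (lt_of_lt_of_le hi h2) (by norm_num)
  · rintro rfl; exact hi

end spectral

section graph

variable {m : ℕ} {r : Fin m → ℕ}

/-- abbreviation for our graph -/
private abbrev GG (r : Fin m → ℕ) : SimpleGraph (Fin 2 ⊕ Σ i : Fin m, Fin (r i)) :=
  graphJoin (⊤ : SimpleGraph (Fin 2)) (blocksGraph r (fun _ => True))

lemma adj_ll {a b : Fin 2} : (GG r).Adj (inl a) (inl b) ↔ a ≠ b := Iff.rfl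

lemma adj_lr_s15 (a : Fin 2) (x : Σ i, Fin (r i)) : (GG r).Adj (inl a) (inr x) := trivial

lemma adj_rl_s15 (x : Σ i, Fin (r i)) (a : Fin 2) : (GG r).Adj (inr x) (inl a) := trivial

lemma adj_rr_s15 {x y : Σ i, Fin (r i)} : (GG r).Adj (inr x) (inr y) ↔ x ≠ y ∧ x.1 = y.1 := by
  show (x ≠ y ∧ x.1 = y.1 ∧ True) ↔ _
  tauto

lemma dist_ll (a b : Fin 2) : (GG r).dist (inl a) (inl b) = if a = b then 0 else 1 := by
  split
  · next h => rw [h]; exact SimpleGraph.dist_self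
  · next h => exact SimpleGraph.dist_eq_one_iff_adj.mpr (adj_ll.mpr h)

lemma dist_lr_s15 (a : Fin 2) (x : Σ i, Fin (r i)) : (GG r).dist (inl a) (inr x) = 1 :=
  SimpleGraph.dist_eq_one_iff_adj.mpr (adj_lr_s15 a x)

lemma dist_rl_s15 (x : Σ i, Fin (r i)) (a : Fin 2) : (GG r).dist (inr x) (inl a) = 1 :=
  SimpleGraph.dist_eq_one_iff_adj.mpr (adj_rl_s15 x a)

lemma dist_rr (x y : Σ i, Fin (r i)) :
    (GG r).dist (inr x) (inr y) =
      if x = y then 0 else if x.1 = y.1 then 1 else 2 := by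
  split
  · next h => rw [h]; exact SimpleGraph.dist_self
  · next h =>
    split
    · next h1 => exact SimpleGraph.dist_eq_one_iff_adj.mpr (adj_rr_s15.mpr ⟨h, h1⟩)
    · next h1 =>
      let p : (GG r).Walk (inr x) (inr y) :=
        .cons (adj_rl_s15 x 0) (.cons (adj_lr_s15 0 y) .nil)
      have h2 : (GG r).dist (inr x) (inr y) ≤ 2 := by
        have := SimpleGraph.dist_le p
        simpa [p] using this
      have h0 : (GG r).dist (inr x) (inr y) ≠ 0 := by
        rw [SimpleGraph.dist_ne_zero_iff_ne_and_reachable]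
        exact ⟨by simp [h], p.reachable⟩
      have hone : (GG r).dist (inr x) (inr y) ≠ 1 := by
        rw [ne_eq, SimpleGraph.dist_eq_one_iff_adj, adj_rr_s15]
        tauto
      omega

lemma ecc_l_s15 (hm : 1 ≤ m) (hr : ∀ i, 1 ≤ r i) (a : Fin 2) : ecc (GG r) (inl a) = 1 := by
  apply le_antisymm
  · apply Finset.sup_le
    rintro (b | x) _
    · rw [dist_ll]; split <;> omega
    · rw [dist_lr_s15]
  · have := Finset.le_sup (f := (GG r).dist (inl a))
      (Finset.mem_univ (inr ⟨⟨0, hm⟩, ⟨0, hr _⟩⟩))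
    rwa [dist_lr_s15] at this

lemma ecc_r_s15 (hm : 2 ≤ m) (hr : ∀ i, 1 ≤ r i) (x : Σ i, Fin (r i)) :
    ecc (GG r) (inr x) = 2 := by
  apply le_antisymm
  · apply Finset.sup_le
    rintro (b | y) _
    · rw [dist_rl_s15]; omega
    · rw [dist_rr]; split
      · omega
      · split <;> omega
  · set j : Fin m := if x.1 = ⟨0, by omega⟩ then ⟨1, by omega⟩ else ⟨0, by omega⟩ with hj
    have hjx : x.1 ≠ j := by
      rw [hj]; split
      · next h => rw [h]; simp [Fin.ext_iff]
      · next h => exact h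
    have := Finset.le_sup (f := (GG r).dist (inr x))
      (Finset.mem_univ (inr ⟨j, ⟨0, hr _⟩⟩))
    rw [dist_rr, if_neg, if_neg hjx] at this
    · exact this
    · intro h; exact hjx (congrArg Sigma.fst h)

/-- the explicit eccentricity matrix -/
private def EE (r : Fin m → ℕ) : Matrix (Fin 2 ⊕ Σ i : Fin m, Fin (r i))
    (Fin 2 ⊕ Σ i : Fin m, Fin (r i)) ℝ := fun u v =>
  match u, v with
  | .inl a, .inl b => if a = b then 0 else 1
  | .inl _, .inr _ => 1
  | .inr _, .inl _ => 1
  | .inr x, .inr y => if x.1 = y.1 then 0 else 2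

lemma eccMatrix_eq_s15 (hm : 2 ≤ m) (hr : ∀ i, 1 ≤ r i) :
    eccMatrix (GG r) = EE r := by
  ext u v
  rcases u with a | x <;> rcases v with b | y <;>
    simp only [eccMatrix, EE, ecc_l_s15 (by omega) hr, ecc_r_s15 hm hr, dist_ll, dist_lr_s15, dist_rl_s15,
      dist_rr]
  · split
    · next h => simp
    · next h => norm_num
  · norm_num
  · norm_num
  · split
    · next h => simp [h]
    · next h =>
      split
      · next h1 => norm_num
      · next h1 => norm_num


noncomputable def ww (r : Fin m → ℕ) : (Fin 2 ⊕ Σ i : Fin m, Fin (r i)) → ℝ :=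
  Sum.elim (fun _ => (Real.sqrt 2)⁻¹) (fun _ => Real.sqrt 2)

lemma sum_split (f : (Fin 2 ⊕ Σ i : Fin m, Fin (r i)) → ℝ) :
    ∑ u, f u = (f (inl 0) + f (inl 1)) + ∑ i, ∑ a, f (inr ⟨i, a⟩) := by
  rw [Fintype.sum_sum_type, Fin.sum_univ_two, ← Finset.univ_sigma_univ, Finset.sum_sigma]

lemma quad_bound (z : (Fin 2 ⊕ Σ i : Fin m, Fin (r i)) → ℝ) :
    z ⬝ᵥ (EE r *ᵥ z) ≤ (ww r ⬝ᵥ z) ^ 2 := by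
  set s : Fin m → ℝ := fun i => ∑ a, z (inr ⟨i, a⟩) with hs
  set S : ℝ := ∑ i, s i with hS
  set A : ℝ := z (inl 0) with hA
  set B : ℝ := z (inl 1) with hB
  set T : ℝ := ∑ i, (s i) ^ 2 with hT_def
  -- dot product with w
  have hw : ww r ⬝ᵥ z = (Real.sqrt 2)⁻¹ * (A + B) + Real.sqrt 2 * S := by
    rw [dotProduct, sum_split]
    simp only [ww, Sum.elim_inl, Sum.elim_inr]
    rw [hS, Finset.mul_sum]
    rw [Finset.sum_congr rfl (fun i _ => (Finset.mul_sum _ _ _).symm)]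
    ring
  -- the rows of EE applied to z
  have h1 : ∀ a, (EE r *ᵥ z) (inl a) = (A + B - z (inl a)) + S := by
    intro a
    show (EE r (inl a)) ⬝ᵥ z = _
    rw [dotProduct, sum_split]
    have hin : ∀ i, ∑ b : Fin (r i), EE r (inl a) (inr ⟨i, b⟩) * z (inr ⟨i, b⟩) = s i := by
      intro i
      simp [EE, hs]
    rw [Finset.sum_congr rfl fun i _ => hin i, ← hS]
    fin_cases a <;> simp [EE, ← hA, ← hB] <;> ring
  have h2 : ∀ x : Σ i, Fin (r i),
      (EE r *ᵥ z) (inr x) = (A + B) + (2 * S - 2 * s x.1) := by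
    intro x
    show (EE r (inr x)) ⬝ᵥ z = _
    rw [dotProduct, sum_split]
    have hin : ∀ i, ∑ b : Fin (r i), EE r (inr x) (inr ⟨i, b⟩) * z (inr ⟨i, b⟩)
        = (if x.1 = i then 0 else 2) * s i := by
      intro i
      rw [hs, Finset.mul_sum]
      refine Finset.sum_congr rfl fun b _ => ?_
      simp only [EE]
    rw [Finset.sum_congr rfl fun i _ => hin i]
    have : ∀ i ∈ Finset.univ, (if x.1 = i then (0:ℝ) else 2) * s i
        = 2 * s i - (if x.1 = i then 2 * s i else 0) := by
      intro i _; split <;> ring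
    rw [Finset.sum_congr rfl this, Finset.sum_sub_distrib, Finset.sum_ite_eq,
      if_pos (Finset.mem_univ _), ← Finset.mul_sum, ← hS]
    simp only [EE, ← hA, ← hB]
    ring
  -- the quadratic form
  have hq : z ⬝ᵥ (EE r *ᵥ z) = 2 * A * B + 2 * (A + B) * S + 2 * (S ^ 2 - T) := by
    rw [dotProduct, sum_split]
    have hin : ∀ i, ∑ a : Fin (r i), z (inr ⟨i, a⟩) * (EE r *ᵥ z) (inr ⟨i, a⟩)
        = s i * ((A + B) + (2 * S - 2 * s i)) := by
      intro i
      rw [hs, Finset.sum_mul]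
      exact Finset.sum_congr rfl fun a _ => by rw [h2 ⟨i, a⟩]
    rw [Finset.sum_congr rfl fun i _ => hin i, h1 0, h1 1]
    have : ∀ i ∈ Finset.univ, s i * ((A + B) + (2 * S - 2 * s i))
        = s i * (A + B) + 2 * S * s i - 2 * (s i) ^ 2 := fun i _ => by ring
    rw [Finset.sum_congr rfl this, Finset.sum_sub_distrib, Finset.sum_add_distrib,
      ← Finset.sum_mul, ← Finset.mul_sum, ← Finset.mul_sum, ← hS, ← hA, ← hB, ← hT_def]
    ring
  -- expanding the square
  have hd : Real.sqrt 2 ^ 2 = 2 := Real.sq_sqrt (by norm_num)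
  have hcd : (Real.sqrt 2)⁻¹ * Real.sqrt 2 = 1 :=
    inv_mul_cancel₀ (by positivity)
  have hc : ((Real.sqrt 2)⁻¹) ^ 2 = 1 / 2 := by
    rw [inv_pow, hd]; norm_num
  have hrhs : ((Real.sqrt 2)⁻¹ * (A + B) + Real.sqrt 2 * S) ^ 2
      = (A + B) ^ 2 / 2 + 2 * (A + B) * S + 2 * S ^ 2 := by
    linear_combination (A + B) ^ 2 * hc + 2 * (A + B) * S * hcd + S ^ 2 * hd
  have hT : 0 ≤ T := Finset.sum_nonneg fun i _ => sq_nonneg _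
  rw [hq, hw, hrhs]
  nlinarith [sq_nonneg (A - B), hT]

lemma exists_pos_quad (hm : 2 ≤ m) (hr : ∀ i, 1 ≤ r i) :
    ∃ x : (Fin 2 ⊕ Σ i : Fin m, Fin (r i)) → ℝ, 0 < x ⬝ᵥ (EE r *ᵥ x) := by
  set p : Fin 2 ⊕ Σ i : Fin m, Fin (r i) := inr ⟨⟨0, by omega⟩, ⟨0, hr _⟩⟩ with hp
  set q : Fin 2 ⊕ Σ i : Fin m, Fin (r i) := inr ⟨⟨1, by omega⟩, ⟨0, hr _⟩⟩ with hq
  refine ⟨Pi.single p 1 + Pi.single q 1, ?_⟩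
  rw [Matrix.mulVec_add, Matrix.mulVec_single, Matrix.mulVec_single]
  have hppqq : ∀ u, (fun i => EE r i p * 1) u + (fun i => EE r i q * 1) u
      = EE r u p + EE r u q := by intro u; simp
  have : (Pi.single p (1:ℝ) + Pi.single q 1) ⬝ᵥ
      ((fun i => EE r i p * 1) + fun i => EE r i q * 1)
      = (EE r p p + EE r p q) + (EE r q p + EE r q q) := by
    rw [add_dotProduct, single_dotProduct, single_dotProduct]
    simp [Pi.add_apply]
  change 0 < (Pi.single p (1:ℝ) + Pi.single q 1) ⬝ᵥ ((fun i => EE r i p * 1) + fun i => EE r i q * 1)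
  rw [this]
  have h1 : EE r p p = 0 := by simp [EE, hp]
  have h2 : EE r q q = 0 := by simp [EE, hq]
  have h3 : EE r p q = 2 := by
    simp only [EE, hp, hq]
    rw [if_neg]
    simp [Fin.ext_iff]
  have h4 : EE r q p = 2 := by
    simp only [EE, hp, hq]
    rw [if_neg]
    simp [Fin.ext_iff]
  rw [h1, h2, h3, h4]
  norm_num

end graph

/-- for `k ≥ 4`, the join of `K₂` with the disjoint union of cliques of
sizes `r 0, …, r (k-2)` (a mixed extension of `S_k` of type `(2, r₂, …, r_k)`) has
exactly one positive eccentricity eigenvalue. -/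
theorem stmt15 (k : ℕ) (hk : 4 ≤ k) (r : Fin (k - 1) → ℕ) (hr : ∀ i, 1 ≤ r i) :
    posEigCount (eccMatrix_isHermitian (graphJoin (⊤ : SimpleGraph (Fin 2))
      (blocksGraph r (fun _ => True)))) = 1 := by
  have hm : 2 ≤ k - 1 := by omega
  have hq : ∀ z, z ⬝ᵥ (eccMatrix (graphJoin (⊤ : SimpleGraph (Fin 2))
      (blocksGraph r (fun _ => True))) *ᵥ z) ≤ (ww r ⬝ᵥ z) ^ 2 := by
    intro z
    rw [eccMatrix_eq_s15 hm hr]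
    exact quad_bound z
  obtain ⟨x, hx⟩ := exists_pos_quad hm hr
  rw [← eccMatrix_eq_s15 hm hr] at hx
  unfold posEigCount
  exact posEigCount_eq_one_of _ (ww r) hq x hx
end spectral
end
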